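/- arXiv:2006.06505 — 2 statements merged into one kernel-verified Lean document; each statement's English description precedes it below -/
import Mathlib

section
/- For any cycle u_1 → u_2 → ⋯ → u_{2p} → u_1 on vertex set [n] (with u_{2p+1} = u_1) in which every undirected edge {u_j, u_{j+1}} appears at least twice, the number of distinct vertices visited is at most p + 1. -/
/-- For a closed cycle `u 0 → u 1 → ⋯ → u (2p-1) → u 0` on `[n]` (encoded as a `2p`-periodic
function `u : ℕ → Fin n`) in which every undirected edge appears at least twice, the number of
distinct vertices visited is at most `p + 1`. -/
theorem stmt4 {n p : ℕ} (hp : 0 < p) (u : ℕ → Fin n)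
    (hper : ∀ j, u (j + 2*p) = u j)
    (hrep : ∀ j < 2*p, ∃ j' < 2*p, j' ≠ j ∧
      s(u j', u (j'+1)) = s(u j, u (j+1))) :
    ((Finset.range (2*p)).image u).card ≤ p + 1 := by
  classical
  set E : Finset (Sym2 (Fin n)) :=
    (Finset.range (2*p)).image (fun j => s(u j, u (j+1))) with hE
  -- Step 1: E.card ≤ p, since each edge has at least 2 preimages among 2p indices
  have hEcard : E.card ≤ p := by
    have hmaps : ∀ j ∈ Finset.range (2*p), (fun j => s(u j, u (j+1))) j ∈ E := by
      intro j hj; exact Finset.mem_image_of_mem _ hj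
    have hsum := Finset.card_eq_sum_card_fiberwise hmaps
    have hfib : ∀ e ∈ E, 2 ≤ ((Finset.range (2*p)).filter
        (fun j => s(u j, u (j+1)) = e)).card := by
      intro e he
      rw [hE, Finset.mem_image] at he
      obtain ⟨j, hj, hje⟩ := he
      rw [Finset.mem_range] at hj
      obtain ⟨j', hj', hne, heq⟩ := hrep j hj
      refine Finset.one_lt_card.2 ⟨j, ?_, j', ?_, hne.symm⟩
      · exact Finset.mem_filter.2 ⟨Finset.mem_range.2 hj, hje⟩
      · exact Finset.mem_filter.2 ⟨Finset.mem_range.2 hj', heq.trans hje⟩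
    have h2 : 2 * E.card ≤ 2 * p := by
      calc 2 * E.card = ∑ _e ∈ E, 2 := by
            rw [Finset.sum_const, smul_eq_mul, mul_comm]
        _ ≤ ∑ e ∈ E, ((Finset.range (2*p)).filter
              (fun j => s(u j, u (j+1)) = e)).card := Finset.sum_le_sum hfib
        _ = (Finset.range (2*p)).card := hsum.symm
        _ = 2 * p := Finset.card_range _
    omega
  -- Step 2: vertex count ≤ E.card + 1
  set V : Finset (Fin n) := (Finset.range (2*p)).image u with hV
  have h0 : u 0 ∈ V := Finset.mem_image_of_mem u (Finset.mem_range.2 (by omega))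
  have hVerase : V.card = (V.erase (u 0)).card + 1 :=
    (Finset.card_erase_add_one h0).symm
  -- the map from a vertex to the edge entering its first occurrence
  set φ : Fin n → Sym2 (Fin n) := fun v =>
    if h : ∃ j, u j = v then s(u (Nat.find h - 1), u (Nat.find h)) else s(v, v) with hφ
  have key : ∀ (v w : Fin n) (hv : ∃ j, u j = v) (hw : ∃ j, u j = w),
      Nat.find hv < Nat.find hw →
      s(u (Nat.find hv - 1), u (Nat.find hv)) = s(u (Nat.find hw - 1), u (Nat.find hw)) →
      v = w := by
    intro v w hv hw hab heq
    have hua : u (Nat.find hv) = v := Nat.find_spec hv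
    have hub : u (Nat.find hw) = w := Nat.find_spec hw
    rw [Sym2.eq_iff] at heq
    rcases heq with ⟨h1, h2⟩ | ⟨h1, h2⟩
    · rw [← hua, ← hub, h2]
    · exfalso
      exact Nat.find_min hw (show Nat.find hv - 1 < Nat.find hw by omega) (h1.trans hub)
  have hinj : (V.erase (u 0)).card ≤ E.card := by
    apply Finset.card_le_card_of_injOn φ
    · intro v hv
      have hv0 : v ≠ u 0 := Finset.ne_of_mem_erase hv
      have hvV : v ∈ V := Finset.mem_of_mem_erase hv
      rw [hV, Finset.mem_image] at hvV
      obtain ⟨j, hj, hjv⟩ := hvV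
      rw [Finset.mem_range] at hj
      have h : ∃ j, u j = v := ⟨j, hjv⟩
      have hN : Nat.find h ≤ j := Nat.find_min' h hjv
      have hN1 : 1 ≤ Nat.find h := by
        rcases Nat.eq_zero_or_pos (Nat.find h) with h0' | h0'
        · exact absurd (h0' ▸ Nat.find_spec h).symm hv0
        · exact h0'
      rw [hφ]
      simp only [dif_pos h]
      have : Nat.find h - 1 + 1 = Nat.find h := by omega
      rw [hE, Finset.mem_coe, Finset.mem_image]
      exact ⟨Nat.find h - 1, Finset.mem_range.2 (by omega), by rw [this]⟩
    · intro v hv w hw hvw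
      simp only [Finset.mem_coe] at hv hw
      have hv' : ∃ j, u j = v := by
        have := Finset.mem_of_mem_erase hv
        rw [hV, Finset.mem_image] at this
        obtain ⟨j, _, hj⟩ := this; exact ⟨j, hj⟩
      have hw' : ∃ j, u j = w := by
        have := Finset.mem_of_mem_erase hw
        rw [hV, Finset.mem_image] at this
        obtain ⟨j, _, hj⟩ := this; exact ⟨j, hj⟩
      rw [hφ] at hvw
      simp only [dif_pos hv', dif_pos hw'] at hvw
      rcases Nat.lt_trichotomy (Nat.find hv') (Nat.find hw') with h | h | h
      · exact key v w hv' hw' h hvw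
      · rw [← Nat.find_spec hv', ← Nat.find_spec hw', h]
      · exact (key w v hw' hv' h hvw.symm).symm
  omega
end

section
/- Let A be an n×n real symmetric matrix with zero diagonal and max_{i,j}|A_{ij}| ≤ 1, and let σ := max_i (∑_j A_{ij}²)^{1/2}. Fix a shape s of a length-2p cycle in which every edge appears at least twice, with span m(s) (number of distinct vertices), and fix a starting vertex u ∈ [n]. Then the sum over all cycles u = u_1 → u_2 → ⋯ → u_{2p} → u_1 of shape s of the product ∏_{j=1}^{2p} |A_{u_j u_{j+1}}| is at most σ^{2(m(s)−1)}. -/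
open Matrix Finset

lemma tree_sum {n m : ℕ} (u : Fin n) (r : Fin m) (par : Fin m → Fin m)
    (t : Fin m → ℕ) (B : Fin n → Fin n → ℝ) (hB : ∀ x y, 0 ≤ B x y)
    (s : ℝ) (hs : 0 ≤ s) (hrow : ∀ x : Fin n, ∑ y, B x y ≤ s)
    (S : Finset (Fin m)) (hrS : r ∉ S) (hpar : ∀ v ∈ S, t (par v) < t v) :
    ∑ φ ∈ Finset.univ.filter (fun φ : Fin m → Fin n =>
        φ r = u ∧ ∀ v, v ∉ insert r S → φ v = u),
      ∏ v ∈ S, B (φ (par v)) (φ v) ≤ s ^ S.card := by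
  classical
  revert hrS hpar
  induction S using Finset.strongInduction with
  | _ S ih =>
    intro hrS hpar
    rcases S.eq_empty_or_nonempty with rfl | hne
    · have hfil : Finset.univ.filter (fun φ : Fin m → Fin n =>
          φ r = u ∧ ∀ v, v ∉ insert r (∅ : Finset (Fin m)) → φ v = u)
          = {fun _ => u} := by
        ext φ
        simp only [mem_filter, mem_univ, true_and, mem_singleton, insert_empty_eq,
          mem_insert, notMem_empty, or_false]
        constructor
        · rintro ⟨h1, h2⟩
          funext v
          by_cases hv : v = r
          · subst hv; exact h1
          · exact h2 v hv
        · rintro rfl; exact ⟨rfl, fun _ _ => rfl⟩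
      rw [hfil]
      simp
    · obtain ⟨w, hwS, hwmax⟩ := S.exists_max_image t hne
      have hwr : w ≠ r := fun h => hrS (h ▸ hwS)
      have hparw : ∀ v ∈ S, par v ≠ w := by
        intro v hv hpv
        have h1 := hpar v hv
        have h2 := hwmax v hv
        rw [hpv] at h1; omega
      set S' := S.erase w with hS'
      have hwS' : w ∉ insert r S' := by
        simp [hS', hwr]
      have key : ∑ φ ∈ Finset.univ.filter (fun φ : Fin m → Fin n =>
            φ r = u ∧ ∀ v, v ∉ insert r S → φ v = u),
          ∏ v ∈ S, B (φ (par v)) (φ v)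
          = ∑ q ∈ (Finset.univ.filter (fun φ : Fin m → Fin n =>
              φ r = u ∧ ∀ v, v ∉ insert r S' → φ v = u)) ×ˢ (Finset.univ : Finset (Fin n)),
            (∏ v ∈ S', B (q.1 (par v)) (q.1 v)) * B (q.1 (par w)) q.2 := by
        refine Finset.sum_bij' (fun φ _ => (Function.update φ w u, φ w))
          (fun q _ => Function.update q.1 w q.2) ?_ ?_ ?_ ?_ ?_
        · intro φ hφ
          simp only [mem_filter, mem_univ, true_and] at hφ
          rw [Finset.mem_product]
          refine ⟨?_, Finset.mem_univ _⟩
          simp only [mem_filter, mem_univ, true_and]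
          constructor
          · rw [Function.update_of_ne (Ne.symm hwr)]; exact hφ.1
          · intro v hv
            by_cases hvw : v = w
            · subst hvw; simp
            · rw [Function.update_of_ne hvw]
              apply hφ.2
              simp only [mem_insert] at hv ⊢
              push_neg at hv ⊢
              refine ⟨hv.1, fun hvS => ?_⟩
              exact hv.2 (Finset.mem_erase.mpr ⟨hvw, hvS⟩)
        · intro q hq
          rw [Finset.mem_product] at hq
          simp only [mem_filter, mem_univ, true_and] at hq ⊢
          refine ⟨?_, ?_⟩
          · rw [Function.update_of_ne (Ne.symm hwr)]; exact hq.1.1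
          · intro v hv
            have hvw : v ≠ w := by
              rintro rfl
              exact hv (Finset.mem_insert_of_mem hwS)
            rw [Function.update_of_ne hvw]
            apply hq.1.2
            simp only [mem_insert] at hv ⊢
            push_neg at hv ⊢
            exact ⟨hv.1, fun h => hv.2 (Finset.mem_of_mem_erase h)⟩
        · intro φ hφ
          simp [Function.update_idem, Function.update_eq_self]
        · intro q hq
          rw [Finset.mem_product] at hq
          simp only [mem_filter, mem_univ, true_and] at hq
          have hqw : q.1 w = u := hq.1.2 w hwS'
          have h1 : Function.update (Function.update q.1 w q.2) w u = q.1 := by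
            rw [Function.update_idem, show u = q.1 w from hqw.symm, Function.update_eq_self]
          have h2 : Function.update q.1 w q.2 w = q.2 := Function.update_self _ _ _
          exact Prod.ext h1 h2
        · intro φ hφ
          have heq : ∀ v ∈ S', B ((Function.update φ w u) (par v)) ((Function.update φ w u) v)
              = B (φ (par v)) (φ v) := by
            intro v hv
            rw [Function.update_of_ne (hparw v (Finset.mem_of_mem_erase hv)),
              Function.update_of_ne (Finset.ne_of_mem_erase hv)]
          show ∏ v ∈ S, B (φ (par v)) (φ v)
            = (∏ v ∈ S', B ((Function.update φ w u) (par v)) ((Function.update φ w u) v))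
              * B ((Function.update φ w u) (par w)) (φ w)
          rw [Finset.prod_congr rfl heq, Function.update_of_ne (hparw w hwS)]
          exact (Finset.prod_erase_mul S _ hwS).symm
      rw [key, Finset.sum_product]
      have hcard : S.card = S'.card + 1 := by
        rw [hS', Finset.card_erase_of_mem hwS]
        have : 0 < S.card := Finset.card_pos.mpr hne
        omega
      rw [hcard, pow_succ]
      calc ∑ ψ ∈ Finset.univ.filter (fun φ : Fin m → Fin n =>
            φ r = u ∧ ∀ v, v ∉ insert r S' → φ v = u),
          ∑ x : Fin n, (∏ v ∈ S', B (ψ (par v)) (ψ v)) * B (ψ (par w)) x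
          ≤ ∑ ψ ∈ Finset.univ.filter (fun φ : Fin m → Fin n =>
            φ r = u ∧ ∀ v, v ∉ insert r S' → φ v = u),
            (∏ v ∈ S', B (ψ (par v)) (ψ v)) * s := by
            apply Finset.sum_le_sum
            intro ψ hψ
            rw [← Finset.mul_sum]
            exact mul_le_mul_of_nonneg_left (hrow _)
              (Finset.prod_nonneg fun v _ => hB _ _)
        _ = (∑ ψ ∈ Finset.univ.filter (fun φ : Fin m → Fin n =>
            φ r = u ∧ ∀ v, v ∉ insert r S' → φ v = u),
            ∏ v ∈ S', B (ψ (par v)) (ψ v)) * s := by rw [Finset.sum_mul]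
        _ ≤ s ^ S'.card * s := by
            apply mul_le_mul_of_nonneg_right _ hs
            exact ih S' (Finset.erase_ssubset hwS)
              (fun h => hrS (Finset.mem_of_mem_erase h))
              (fun v hv => hpar v (Finset.mem_of_mem_erase hv))


/-- Lemma 2.5 of Bandeira–van Handel: for a symmetric zero-diagonal matrix `A` with entries
bounded by `1` in absolute value, a shape `sh` (a `2p`-periodic surjective cycle on `m` labels,
with every undirected edge appearing at least twice) and a starting vertex `u`, the sum over all
cycles of shape `sh` starting at `u` (i.e. over injections `φ : Fin m ↪ Fin n` with
`φ (sh 0) = u`) of the product of `|A|` along the cycle is at most `σ^(2(m-1))`,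
where `σ = max_i (∑ j A i j ^ 2)^{1/2}`. -/
theorem stmt5 {n m p : ℕ} (hp : 0 < p) (hn : 0 < n)
    (A : Matrix (Fin n) (Fin n) ℝ) (hsym : A.IsSymm) (hdiag : ∀ i, A i i = 0)
    (hbd : ∀ i j, |A i j| ≤ 1)
    (σ : ℝ) (hσ : σ = Real.sqrt (⨆ i, ∑ j, (A i j) ^ 2))
    (sh : ℕ → Fin m) (hper : ∀ j, sh (j + 2*p) = sh j)
    (hsurj : Function.Surjective sh)
    (hrep : ∀ j < 2*p, ∃ j' < 2*p, j' ≠ j ∧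
      s(sh j', sh (j'+1)) = s(sh j, sh (j+1)))
    (u : Fin n) :
    ∑ φ ∈ Finset.univ.filter (fun φ : Fin m ↪ Fin n => φ (sh 0) = u),
      ∏ j ∈ Finset.range (2*p), |A (φ (sh j)) (φ (sh (j+1)))|
      ≤ σ ^ (2*(m-1)) := by
  classical
  set r := sh 0 with hr
  -- first-appearance times
  have hex : ∀ v : Fin m, ∃ k, sh k = v := hsurj
  set t : Fin m → ℕ := fun v => Nat.find (hex v) with ht
  have ht_spec : ∀ v, sh (t v) = v := fun v => Nat.find_spec (hex v)
  have ht_min : ∀ v k, sh k = v → t v ≤ k := fun v k hk => Nat.find_le hk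
  -- periodicity
  have hper' : ∀ i k, sh (k + i*(2*p)) = sh k := by
    intro i
    induction i with
    | zero => simp
    | succ i ihi =>
      intro k
      have : k + (i+1)*(2*p) = (k + i*(2*p)) + 2*p := by ring
      rw [this, hper, ihi]
  have ht_lt : ∀ v, t v < 2*p := by
    intro v
    obtain ⟨k, hk⟩ := hex v
    have hmod : sh (k % (2*p)) = v := by
      have := hper' (k / (2*p)) (k % (2*p))
      rw [Nat.mod_add_div'] at this
      rw [← this, hk]
    have := ht_min v _ hmod
    have h2p : 0 < 2*p := by omega
    exact lt_of_le_of_lt this (Nat.mod_lt _ h2p)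
  have ht_r : t r = 0 := Nat.eq_zero_of_le_zero (ht_min r 0 rfl)
  have ht_pos : ∀ v, v ≠ r → 0 < t v := by
    intro v hv
    rcases Nat.eq_zero_or_pos (t v) with h0 | h; swap; · exact h
    exfalso; apply hv
    rw [← ht_spec v, h0]
  set par : Fin m → Fin m := fun v => sh (t v - 1) with hpar
  have hparlt : ∀ v, v ≠ r → t (par v) < t v := by
    intro v hv
    have h1 := ht_pos v hv
    have := ht_min (par v) (t v - 1) rfl
    omega
  set S : Finset (Fin m) := Finset.univ.erase r with hS
  have hmemS : ∀ v, v ∈ S ↔ v ≠ r := by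
    intro v; simp [hS]
  -- the chosen second step
  have h2 : ∀ v : Fin m, ∃ j', v ≠ r → (j' < 2*p ∧ j' ≠ t v - 1 ∧
      s(sh j', sh (j'+1)) = s(par v, v)) := by
    intro v
    by_cases hv : v = r
    · exact ⟨0, fun h => absurd hv h⟩
    · have hj1 : t v - 1 < 2*p := by have := ht_lt v; omega
      obtain ⟨j', hj'lt, hj'ne, hj'e⟩ := hrep (t v - 1) hj1
      refine ⟨j', fun _ => ⟨hj'lt, hj'ne, ?_⟩⟩
      rw [hj'e]
      have : t v - 1 + 1 = t v := by have := ht_pos v hv; omega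
      rw [this, ht_spec v]
  choose j₂ hj₂ using h2
  -- edge injectivity
  have hedge_inj : ∀ v, v ≠ r → ∀ w, w ≠ r →
      s(par v, v) = s(par w, (w:Fin m)) → v = w := by
    intro v hv w hw h
    rw [Sym2.eq_iff] at h
    rcases h with ⟨_, h2⟩ | ⟨h1, h2⟩
    · exact h2
    · exfalso
      have hv' := hparlt v hv
      have hw' := hparlt w hw
      rw [h1] at hv'
      rw [← h2] at hw'
      omega
  -- the pair of steps for each vertex
  set P : Fin m → Finset ℕ := fun v => {t v - 1, j₂ v} with hP
  have hPsub : ∀ v, v ≠ r → P v ⊆ Finset.range (2*p) := by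
    intro v hv j hj
    simp only [hP, Finset.mem_insert, Finset.mem_singleton] at hj
    rcases hj with rfl | rfl
    · have := ht_lt v; exact Finset.mem_range.mpr (by omega)
    · exact Finset.mem_range.mpr (hj₂ v hv).1
  have hPedge : ∀ v, v ≠ r → ∀ j ∈ P v, s(sh j, sh (j+1)) = s(par v, v) := by
    intro v hv j hj
    simp only [hP, Finset.mem_insert, Finset.mem_singleton] at hj
    rcases hj with rfl | rfl
    · have h1 : t v - 1 + 1 = t v := by have := ht_pos v hv; omega
      rw [h1, ht_spec v]
    · exact (hj₂ v hv).2.2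
  have hPdisj : (S : Set (Fin m)).PairwiseDisjoint P := by
    intro v hv w hw hvw
    rw [Finset.mem_coe, hmemS] at hv hw
    simp only [Function.onFun]
    rw [Finset.disjoint_left]
    intro j hjv hjw
    apply hvw
    apply hedge_inj v hv w hw
    rw [← hPedge v hv j hjv, hPedge w hw j hjw]
  -- per-φ bound
  have hterm : ∀ (ψ : Fin m → Fin n),
      ∏ j ∈ Finset.range (2*p), |A (ψ (sh j)) (ψ (sh (j+1)))|
      ≤ ∏ v ∈ S, (A (ψ (par v)) (ψ v))^2 := by
    intro ψ
    set T : Finset ℕ := S.biUnion P with hT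
    have hTsub : T ⊆ Finset.range (2*p) := by
      intro j hj
      rw [hT, Finset.mem_biUnion] at hj
      obtain ⟨v, hv, hjv⟩ := hj
      exact hPsub v ((hmemS v).mp hv) hjv
    have hsplit : ∏ j ∈ Finset.range (2*p), |A (ψ (sh j)) (ψ (sh (j+1)))|
        = (∏ j ∈ Finset.range (2*p) \ T, |A (ψ (sh j)) (ψ (sh (j+1)))|)
          * ∏ j ∈ T, |A (ψ (sh j)) (ψ (sh (j+1)))| := (Finset.prod_sdiff hTsub).symm
    rw [hsplit]
    have h1 : (∏ j ∈ Finset.range (2*p) \ T, |A (ψ (sh j)) (ψ (sh (j+1)))|) ≤ 1 :=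
      Finset.prod_le_one (fun j _ => abs_nonneg _) (fun j _ => hbd _ _)
    have h0 : (0:ℝ) ≤ ∏ j ∈ T, |A (ψ (sh j)) (ψ (sh (j+1)))| :=
      Finset.prod_nonneg fun j _ => abs_nonneg _
    calc (∏ j ∈ Finset.range (2*p) \ T, |A (ψ (sh j)) (ψ (sh (j+1)))|)
          * ∏ j ∈ T, |A (ψ (sh j)) (ψ (sh (j+1)))|
        ≤ 1 * ∏ j ∈ T, |A (ψ (sh j)) (ψ (sh (j+1)))| := mul_le_mul_of_nonneg_right h1 h0
      _ = ∏ j ∈ T, |A (ψ (sh j)) (ψ (sh (j+1)))| := one_mul _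
      _ = ∏ v ∈ S, ∏ j ∈ P v, |A (ψ (sh j)) (ψ (sh (j+1)))| := Finset.prod_biUnion hPdisj
      _ = ∏ v ∈ S, (A (ψ (par v)) (ψ v))^2 := by
          apply Finset.prod_congr rfl
          intro v hv
          have hvr := (hmemS v).mp hv
          have habs : ∀ j ∈ P v, |A (ψ (sh j)) (ψ (sh (j+1)))| = |A (ψ (par v)) (ψ v)| := by
            intro j hj
            have := hPedge v hvr j hj
            rw [Sym2.eq_iff] at this
            rcases this with ⟨ha, hb⟩ | ⟨ha, hb⟩
            · rw [ha, hb]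
            · rw [ha, hb]
              rw [show A (ψ v) (ψ (par v)) = A (ψ (par v)) (ψ v) from hsym.apply _ _]
          rw [Finset.prod_congr rfl habs]
          have hne : t v - 1 ≠ j₂ v := (Ne.symm (hj₂ v hvr).2.1)
          rw [hP]
          rw [Finset.prod_pair hne]
          rw [← abs_mul, ← sq]
          exact abs_of_nonneg (sq_nonneg _)
    -- end calc
  -- σ² bound on rows
  have hσ0 : 0 ≤ σ := hσ ▸ Real.sqrt_nonneg _
  have hrow : ∀ x : Fin n, ∑ y, (A x y)^2 ≤ σ^2 := by
    intro x
    have hbdd : BddAbove (Set.range fun i => ∑ j, (A i j)^2) :=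
      Set.Finite.bddAbove (Set.finite_range _)
    have hle : ∑ j, (A x j)^2 ≤ ⨆ i, ∑ j, (A i j)^2 := le_ciSup hbdd x
    have hnn : (0:ℝ) ≤ ⨆ i, ∑ j, (A i j)^2 :=
      le_trans (Finset.sum_nonneg fun j _ => sq_nonneg _) hle
    rw [hσ, Real.sq_sqrt hnn]
    exact hle
  -- assemble
  have hScard : S.card = m - 1 := by
    rw [hS, Finset.card_erase_of_mem (Finset.mem_univ r), Finset.card_univ, Fintype.card_fin]
  have hins : insert r S = Finset.univ := by
    rw [hS, Finset.insert_erase (Finset.mem_univ r)]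
  calc ∑ φ ∈ Finset.univ.filter (fun φ : Fin m ↪ Fin n => φ (sh 0) = u),
        ∏ j ∈ Finset.range (2*p), |A (φ (sh j)) (φ (sh (j+1)))|
      ≤ ∑ φ ∈ Finset.univ.filter (fun φ : Fin m ↪ Fin n => φ (sh 0) = u),
        ∏ v ∈ S, (A (φ (par v)) (φ v))^2 :=
        Finset.sum_le_sum fun φ _ => hterm φ
    _ = ∑ ψ ∈ (Finset.univ.filter (fun φ : Fin m ↪ Fin n => φ (sh 0) = u)).image
          (fun φ : Fin m ↪ Fin n => (φ : Fin m → Fin n)),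
        ∏ v ∈ S, (A (ψ (par v)) (ψ v))^2 := by
        rw [Finset.sum_image]
        intro a _ b _ hab
        exact DFunLike.coe_injective hab
    _ ≤ ∑ ψ ∈ Finset.univ.filter (fun ψ : Fin m → Fin n =>
          ψ r = u ∧ ∀ v, v ∉ insert r S → ψ v = u),
        ∏ v ∈ S, (A (ψ (par v)) (ψ v))^2 := by
        apply Finset.sum_le_sum_of_subset_of_nonneg
        · intro ψ hψ
          simp only [Finset.mem_image, Finset.mem_filter, Finset.mem_univ, true_and] at hψ ⊢
          obtain ⟨φ, hφu, rfl⟩ := hψ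
          refine ⟨hφu, fun v hv => absurd (hins ▸ Finset.mem_univ v) hv⟩
        · intro ψ _ _
          exact Finset.prod_nonneg fun v _ => sq_nonneg _
    _ ≤ (σ^2) ^ S.card :=
        tree_sum u r par t (fun x y => (A x y)^2) (fun x y => sq_nonneg _)
          (σ^2) (sq_nonneg σ) hrow S (by simp [hS]) (fun v hv => hparlt v ((hmemS v).mp hv))
    _ = σ ^ (2*(m-1)) := by rw [hScard, ← pow_mul]
end
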